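/- arXiv:2009.05157 — 3 statements merged into one kernel-verified Lean document; each statement's English description precedes it below -/
import Mathlib

section
/- Let π be a pairing of {1,...,m} (m even) regarded as a fixed-point-free involution in S_m, and let γ = (1,2,...,m) be the full cycle. Then the number of cycles of γπ satisfies #cycles(γπ) ≤ m/2 + 1. -/
/-- The number of cycles of a permutation of `Fin m` (fixed points counted as
cycles of length one). -/
def cycleCount {m : ℕ} (σ : Equiv.Perm (Fin m)) : ℕ :=
  Multiset.card σ.cycleType + (Finset.univ.filter fun x => σ x = x).card

open Equiv Equiv.Perm

namespace CycleCountAux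

variable {m : ℕ}

/-- Same-cycle setoid of a permutation. -/
@[reducible] def sc (σ : Perm (Fin m)) : Setoid (Fin m) :=
  ⟨σ.SameCycle, ⟨fun x => SameCycle.refl σ x, fun h => h.symm, fun h1 h2 => h1.trans h2⟩⟩

def cycleCount' {m : ℕ} (σ : Equiv.Perm (Fin m)) : ℕ :=
  Multiset.card σ.cycleType + (Finset.univ.filter fun x => σ x = x).card

/-- map realizing the bijection between same-cycle classes and
(cycle factors) ⊕ (fixed points). -/
def F (σ : Perm (Fin m)) (x : Fin m) :
    {c // c ∈ σ.cycleFactorsFinset} ⊕ {x : Fin m // σ x = x} :=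
  if h : σ x = x then .inr ⟨x, h⟩
  else .inl ⟨σ.cycleOf x, cycleOf_mem_cycleFactorsFinset_iff.2 (mem_support.2 h)⟩

lemma fixed_of_sameCycle {σ : Perm (Fin m)} {x y : Fin m} (h : σ.SameCycle x y)
    (hx : σ x = x) : y = x := by
  obtain ⟨i, hi⟩ := h
  rw [← hi, zpow_apply_eq_self_of_apply_eq_self hx]

lemma F_lift (σ : Perm (Fin m)) : ∀ x y : Fin m, σ.SameCycle x y → F σ x = F σ y := by
  intro x y h
  unfold F
  by_cases hx : σ x = x
  · have : y = x := fixed_of_sameCycle h hx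
    subst this; rfl
  · have hy : σ y ≠ y := by
      intro hy
      exact hx (by rw [fixed_of_sameCycle h.symm hy]; exact hy)
    rw [dif_neg hx, dif_neg hy]
    exact congrArg _ (Subtype.ext h.cycleOf_eq)

lemma cycleCount_eq (σ : Perm (Fin m)) :
    cycleCount' σ = Nat.card (Quotient (sc σ)) := by
  classical
  have hinj : Function.Injective (Quotient.lift (F σ) (fun x y (h : (sc σ).r x y) => F_lift σ x y h)) := by
    intro c d
    induction c using Quotient.ind
    induction d using Quotient.ind
    rename_i x y
    intro h
    simp only [Quotient.lift_mk] at h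
    unfold F at h
    by_cases hx : σ x = x <;> by_cases hy : σ y = y <;>
      simp [hx, hy] at h
    · exact Quotient.sound (h ▸ SameCycle.refl σ x)
    · refine Quotient.sound ?_
      have hyy : y ∈ (σ.cycleOf y).support :=
        mem_support_cycleOf_iff.2 ⟨SameCycle.refl σ y, mem_support.2 hy⟩
      rw [← h] at hyy
      exact (mem_support_cycleOf_iff.1 hyy).1
  have hsurj : Function.Surjective (Quotient.lift (F σ) (fun x y (h : (sc σ).r x y) => F_lift σ x y h)) := by
    rintro (⟨c, hc⟩ | ⟨x, hx⟩)
    · obtain ⟨x, hx⟩ := (mem_cycleFactorsFinset_iff.1 hc).1.nonempty_support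
      have hxs : x ∈ c.support := hx
      have hcx : c = σ.cycleOf x := cycle_is_cycleOf hxs hc
      have hσx : σ x ≠ x := by
        have := (mem_cycleFactorsFinset_iff.1 hc).2 x hxs
        rw [← this]; exact mem_support.1 hxs
      refine ⟨Quotient.mk (sc σ) x, ?_⟩
      simp only [Quotient.lift_mk]
      unfold F
      rw [dif_neg hσx]
      exact congrArg _ (Subtype.ext hcx.symm)
    · exact ⟨Quotient.mk (sc σ) x, by simp only [Quotient.lift_mk]; unfold F; rw [dif_pos hx]⟩
  have : Nat.card (Quotient (sc σ)) =
      Nat.card ({c // c ∈ σ.cycleFactorsFinset} ⊕ {x : Fin m // σ x = x}) :=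
    Nat.card_eq_of_bijective _ ⟨hinj, hsurj⟩
  rw [this, Nat.card_sum, cycleCount']
  have h1 : Nat.card {c // c ∈ σ.cycleFactorsFinset} = σ.cycleFactorsFinset.card := by
    rw [Nat.card_eq_fintype_card, Fintype.card_coe]
  have h2 : Nat.card {x : Fin m // σ x = x} =
      (Finset.univ.filter fun x => σ x = x).card := by
    rw [Nat.card_eq_fintype_card, Fintype.card_subtype]
  have h3 : Multiset.card σ.cycleType = σ.cycleFactorsFinset.card := by
    rw [cycleType_def, Multiset.card_map]; rfl
  rw [h1, h2, h3]
/-- The setoid obtained from the same-cycle setoid of `σ` by merging the classes of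
`a` and `b`. -/
def J (σ : Perm (Fin m)) (a b : Fin m) : Setoid (Fin m) where
  r x y := σ.SameCycle x y ∨ (σ.SameCycle x a ∧ σ.SameCycle b y) ∨
    (σ.SameCycle x b ∧ σ.SameCycle a y)
  iseqv := by
    constructor
    · exact fun x => Or.inl (SameCycle.refl σ x)
    · rintro x y (h | ⟨h1, h2⟩ | ⟨h1, h2⟩)
      · exact Or.inl h.symm
      · exact Or.inr (Or.inr ⟨h2.symm, h1.symm⟩)
      · exact Or.inr (Or.inl ⟨h2.symm, h1.symm⟩)
    · rintro x y z (h | ⟨h1, h2⟩ | ⟨h1, h2⟩) (g | ⟨g1, g2⟩ | ⟨g1, g2⟩)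
      · exact Or.inl (h.trans g)
      · exact Or.inr (Or.inl ⟨h.trans g1, g2⟩)
      · exact Or.inr (Or.inr ⟨h.trans g1, g2⟩)
      · exact Or.inr (Or.inl ⟨h1, h2.trans g⟩)
      · exact Or.inl (h1.trans (((h2.trans g1).symm).trans g2))
      · exact Or.inl (h1.trans g2)
      · exact Or.inr (Or.inr ⟨h1, h2.trans g⟩)
      · exact Or.inl (h1.trans g2)
      · exact Or.inl (h1.trans (((h2.trans g1).symm).trans g2))

lemma J_step (σ : Perm (Fin m)) (a b : Fin m) :
    ∀ x : Fin m, (J σ a b).r x ((σ * Equiv.swap a b) x) := by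
  intro x
  rcases eq_or_ne x a with rfl | hxa
  · have : (σ * Equiv.swap x b) x = σ b := by simp [Equiv.swap_apply_left]
    rw [this]
    exact Or.inr (Or.inl ⟨SameCycle.refl σ x, sameCycle_apply_right.2 (SameCycle.refl σ b)⟩)
  · rcases eq_or_ne x b with rfl | hxb
    · have : (σ * Equiv.swap a x) x = σ a := by simp [Equiv.swap_apply_right]
      rw [this]
      exact Or.inr (Or.inr ⟨SameCycle.refl σ x, sameCycle_apply_right.2 (SameCycle.refl σ a)⟩)
    · have : (σ * Equiv.swap a b) x = σ x := by
        simp [Equiv.swap_apply_of_ne_of_ne hxa hxb]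
      rw [this]
      exact Or.inl (sameCycle_apply_right.2 (SameCycle.refl σ x))

lemma J_zpow (σ : Perm (Fin m)) (a b : Fin m) (n : ℤ) :
    ∀ x : Fin m, (J σ a b).r x (((σ * Equiv.swap a b) ^ n) x) := by
  set τ := σ * Equiv.swap a b with hτ
  have hstep' : ∀ x : Fin m, (J σ a b).r x (τ⁻¹ x) := by
    intro x
    have := J_step σ a b (τ⁻¹ x)
    rw [show τ (τ⁻¹ x) = x by simp] at this
    exact (J σ a b).iseqv.symm this
  induction n using Int.induction_on with
  | zero => intro x; simpa using (J σ a b).iseqv.refl x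
  | succ n ih =>
    intro x
    have h1 : (τ ^ ((n : ℤ) + 1)) x = (τ ^ (n : ℤ)) (τ x) := by
      rw [zpow_add_one, Equiv.Perm.mul_apply]
    rw [h1]
    exact (J σ a b).iseqv.trans (J_step σ a b x) (ih (τ x))
  | pred n ih =>
    intro x
    have h1 : (τ ^ (-(n : ℤ) - 1)) x = (τ ^ (-(n : ℤ))) (τ⁻¹ x) := by
      rw [zpow_sub_one, Equiv.Perm.mul_apply]
    rw [h1]
    exact (J σ a b).iseqv.trans (hstep' x) (ih (τ⁻¹ x))

lemma J_of_sameCycle {σ : Perm (Fin m)} {a b x y : Fin m}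
    (h : (σ * Equiv.swap a b).SameCycle x y) : (J σ a b).r x y := by
  obtain ⟨n, hn⟩ := h
  exact hn ▸ J_zpow σ a b n x

lemma card_quot_le (σ : Perm (Fin m)) (a b : Fin m) :
    Nat.card (Quotient (sc σ)) ≤ Nat.card (Quotient (sc (σ * Equiv.swap a b))) + 1 := by
  classical
  set τ := σ * Equiv.swap a b with hτ
  -- step B : card (Q σ) ≤ card (Quotient J) + 1
  have hB : Nat.card (Quotient (sc σ)) ≤ Nat.card (Quotient (J σ a b)) + 1 := by
    have wd : ∀ x y : Fin m, (sc σ).r x y →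
        (if σ.SameCycle b x then (none : Option (Quotient (J σ a b)))
          else some (Quotient.mk (J σ a b) x)) =
        (if σ.SameCycle b y then none else some (Quotient.mk (J σ a b) y)) := by
      intro x y h
      by_cases hbx : σ.SameCycle b x
      · rw [if_pos hbx, if_pos (hbx.trans h)]
      · rw [if_neg hbx, if_neg (fun hby => hbx (hby.trans h.symm))]
        exact congrArg _ (Quotient.sound (Or.inl h))
    have hinj : Function.Injective (Quotient.lift _ (fun x y (h : (sc σ).r x y) => wd x y h)) := by
      intro c d
      induction c using Quotient.ind
      induction d using Quotient.ind
      rename_i x y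
      intro h
      simp only [Quotient.lift_mk] at h
      refine Quotient.sound ?_
      by_cases hbx : σ.SameCycle b x <;> by_cases hby : σ.SameCycle b y <;>
        simp [hbx, hby] at h
      · exact hbx.symm.trans hby
      · rcases (Quotient.exact h : (J σ a b).r x y) with g | ⟨g1, g2⟩ | ⟨g1, g2⟩
        · exact g
        · exact absurd g2 hby
        · exact absurd g1.symm hbx
    calc Nat.card (Quotient (sc σ)) ≤ Nat.card (Option (Quotient (J σ a b))) :=
          Nat.card_le_card_of_injective _ hinj
      _ = Nat.card (Quotient (J σ a b)) + 1 := Finite.card_option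
  -- step C : card (Quotient J) ≤ card (Q τ)
  have hC : Nat.card (Quotient (J σ a b)) ≤ Nat.card (Quotient (sc τ)) := by
    have hsurj : Function.Surjective
        (Quotient.lift (Quotient.mk (J σ a b))
          (fun x y (h : (sc τ).r x y) => Quotient.sound (J_of_sameCycle h))) := by
      intro c
      induction c using Quotient.ind
      rename_i x
      exact ⟨Quotient.mk (sc τ) x, rfl⟩
    exact Nat.card_le_card_of_surjective _ hsurj
  omega


lemma cycleCount'_swap_le (σ : Perm (Fin m)) (a b : Fin m) :
    cycleCount' σ ≤ cycleCount' (σ * Equiv.swap a b) + 1 := by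
  rw [cycleCount_eq, cycleCount_eq]
  exact card_quot_le σ a b

lemma cycleCount'_list_le (l : List (Perm (Fin m)))
    (hl : ∀ s ∈ l, ∃ a b : Fin m, s = Equiv.swap a b) :
    ∀ σ : Perm (Fin m), cycleCount' σ ≤ cycleCount' (σ * l.prod) + l.length := by
  induction l with
  | nil => intro σ; simp
  | cons s t ih =>
    intro σ
    obtain ⟨a, b, rfl⟩ := hl _ List.mem_cons_self
    have h1 := cycleCount'_swap_le σ a b
    have h2 := ih (fun s hs => hl s (List.mem_cons_of_mem _ hs)) (σ * Equiv.swap a b)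
    rw [List.prod_cons, ← mul_assoc]
    calc cycleCount' σ ≤ cycleCount' (σ * Equiv.swap a b) + 1 := h1
      _ ≤ (cycleCount' (σ * Equiv.swap a b * t.prod) + t.length) + 1 := by omega
      _ = cycleCount' (σ * Equiv.swap a b * t.prod) + (t.length + 1) := by omega
      _ = _ := by rw [List.length_cons]

lemma invol_decomp : ∀ (n : ℕ) (σ : Perm (Fin m)), σ.support.card ≤ n → σ * σ = 1 →
    ∃ l : List (Perm (Fin m)), (∀ s ∈ l, ∃ a b : Fin m, s = Equiv.swap a b) ∧
      l.prod = σ ∧ 2 * l.length = σ.support.card := by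
  intro n
  induction n with
  | zero =>
    intro σ hcard _
    have : σ.support = ∅ := Finset.card_eq_zero.1 (Nat.le_zero.1 hcard)
    have hσ : σ = 1 := support_eq_empty_iff.1 this
    exact ⟨[], by simp, by simp [hσ], by simp [this]⟩
  | succ n ih =>
    intro σ hcard hinv
    by_cases hσ : σ = 1
    · exact ⟨[], by simp, by simp [hσ], by simp [hσ]⟩
    · obtain ⟨a, ha⟩ : ∃ a : Fin m, σ a ≠ a := by
        by_contra h
        push_neg at h
        exact hσ (Equiv.ext fun x => h x)
      set b := σ a with hb
      have hab : a ≠ b := fun h => ha h.symm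
      have hσb : σ b = a := by
        have := congrArg (fun f : Perm (Fin m) => f a) hinv
        simpa [hb] using this
      set σ' := σ * Equiv.swap a b with hσ'
      have hσ'a : σ' a = a := by simp [hσ', Equiv.swap_apply_left, hσb]
      have hσ'b : σ' b = b := by simp [hσ', Equiv.swap_apply_right, ← hb]
      have hσ'x : ∀ x : Fin m, x ≠ a → x ≠ b → σ' x = σ x := by
        intro x h1 h2
        simp [hσ', Equiv.swap_apply_of_ne_of_ne h1 h2]
      have hσσ : ∀ x : Fin m, σ (σ x) = x := by
        intro x
        have := congrArg (fun f : Perm (Fin m) => f x) hinv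
        simpa using this
      have hinv' : σ' * σ' = 1 := by
        ext x
        rcases eq_or_ne x a with rfl | hxa
        · simp [Equiv.Perm.mul_apply, hσ'a]
        · rcases eq_or_ne x b with rfl | hxb
          · simp [Equiv.Perm.mul_apply, hσ'b]
          · have hσxa : σ x ≠ a := fun h => hxb (by rw [hb, ← h, hσσ])
            have hσxb : σ x ≠ b := fun h => hxa (by rw [← hσσ x, h, hσb])
            simp [Equiv.Perm.mul_apply, hσ'x x hxa hxb, hσ'x (σ x) hσxa hσxb, hσσ]
      have hsupp : σ'.support = σ.support \ {a, b} := by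
        ext x
        simp only [mem_support, Finset.mem_sdiff, Finset.mem_insert, Finset.mem_singleton]
        rcases eq_or_ne x a with rfl | hxa
        · simp [hσ'a]
        · rcases eq_or_ne x b with rfl | hxb
          · simp [hσ'b]
          · simp [hσ'x x hxa hxb, hxa, hxb]
      have habs : ({a, b} : Finset (Fin m)) ⊆ σ.support := by
        intro x hx
        simp only [Finset.mem_insert, Finset.mem_singleton] at hx
        rcases hx with rfl | rfl
        · exact mem_support.2 ha
        · exact mem_support.2 (fun h => hab (hσb ▸ h))
      have hcard2 : ({a, b} : Finset (Fin m)).card = 2 := Finset.card_pair hab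
      have hsc : σ'.support.card = σ.support.card - 2 := by
        rw [hsupp, Finset.card_sdiff_of_subset habs, hcard2]
      have h2le : 2 ≤ σ.support.card := hcard2 ▸ Finset.card_le_card habs
      obtain ⟨l', hl'1, hl'2, hl'3⟩ := ih σ' (by omega) hinv'
      refine ⟨l' ++ [Equiv.swap a b], ?_, ?_, ?_⟩
      · intro s hs
        rcases List.mem_append.1 hs with h | h
        · exact hl'1 s h
        · simp only [List.mem_singleton] at h
          exact ⟨a, b, h⟩
      · rw [List.prod_append, List.prod_singleton, hl'2, hσ', mul_assoc,
          Equiv.swap_mul_self, mul_one]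
      · rw [List.length_append, List.length_singleton]
        omega

lemma support_eq_univ_of_fpf (σ : Perm (Fin m)) (hfix : ∀ i, σ i ≠ i) :
    σ.support = Finset.univ :=
  Finset.eq_univ_iff_forall.2 fun x => mem_support.2 (hfix x)

end CycleCountAux

open CycleCountAux in
/-- If `π` is a pairing of `{1,...,m}` (`m` even), regarded as a fixed-point-free
involution, and `γ = (1,2,...,m)` is the full cycle, then `#cycles(γπ) ≤ m/2 + 1`. -/
theorem cycleCount_le (m : ℕ) (hm : Even m) (π : Equiv.Perm (Fin m))
    (hinv : π * π = 1) (hfix : ∀ i, π i ≠ i) :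
    cycleCount (finRotate m * π) ≤ m / 2 + 1 := by
  rcases m with _ | _ | n
  · have h1 : (finRotate 0 * π) = 1 := Subsingleton.elim _ _
    rw [h1]
    simp [cycleCount, Equiv.Perm.cycleType_one]
  · exact absurd hm (by decide)
  · have hsupp : π.support = Finset.univ := support_eq_univ_of_fpf π hfix
    obtain ⟨l, hl1, hl2, hl3⟩ := invol_decomp π.support.card π le_rfl hinv
    rw [hsupp, Finset.card_univ, Fintype.card_fin] at hl3
    have main := cycleCount'_list_le l hl1 (finRotate (n + 2) * π)
    rw [hl2, mul_assoc, hinv, mul_one] at main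
    have hγ : cycleCount' (finRotate (n + 2)) = 1 := by
      have hct : Multiset.card (finRotate (n + 2)).cycleType = 1 := by
        rw [isCycle_finRotate.cycleType]
        rfl
      have hfx : (Finset.univ.filter fun x => finRotate (n + 2) x = x).card = 0 := by
        rw [Finset.card_eq_zero, Finset.filter_eq_empty_iff]
        intro x _
        have : x ∈ Equiv.Perm.support (finRotate (n + 2)) := by
          rw [support_finRotate]; exact Finset.mem_univ x
        exact Equiv.Perm.mem_support.1 this
      rw [cycleCount', hct, hfx]
    rw [hγ] at main
    have : cycleCount (finRotate (n + 2) * π) = cycleCount' (finRotate (n + 2) * π) := rfl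
    rw [this]
    omega
end

section
/- Stieltjes inversion: for a finite Borel measure μ on ℝ with Stieltjes transform S, and for any a < b, lim_{ε↘0} (1/π) ∫_a^b Im S(x + iε) dx = μ((a,b)) + (1/2) μ({a,b}). -/
open MeasureTheory Filter intervalIntegral

namespace StieltjesAux

lemma im_inv (t x ε : ℝ) :
    (((t : ℂ) - (x + ε * Complex.I))⁻¹).im = ε / ((t - x)^2 + ε^2) := by
  rw [Complex.inv_im]
  have h1 : ((t : ℂ) - (x + ε * Complex.I)).im = -ε := by simp
  have h2 : ((t : ℂ) - (x + ε * Complex.I)).re = t - x := by simp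
  rw [h1, Complex.normSq_apply, h1, h2]
  ring_nf

lemma cont_inv (x ε : ℝ) (hε : 0 < ε) :
    Continuous (fun t : ℝ => ((t : ℂ) - (x + ε * Complex.I))⁻¹) := by
  apply Continuous.inv₀ (by continuity)
  intro t h
  have : ((t : ℂ) - (x + ε * Complex.I)).im = -ε := by simp
  rw [h] at this
  simp at this
  exact hε.ne' this

lemma integrable_inv (μ : Measure ℝ) [IsFiniteMeasure μ] (x ε : ℝ) (hε : 0 < ε) :
    Integrable (fun t : ℝ => ((t : ℂ) - (x + ε * Complex.I))⁻¹) μ := by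
  refine (integrable_const (ε⁻¹)).mono' ((cont_inv x ε hε).aestronglyMeasurable) ?_
  filter_upwards with t
  rw [norm_inv]
  have h1 : ((t : ℂ) - (x + ε * Complex.I)).im = -ε := by simp
  have hle : ε ≤ ‖(t : ℂ) - (x + ε * Complex.I)‖ := by
    calc ε = |(-ε)| := by rw [abs_neg, abs_of_pos hε]
    _ = |((t : ℂ) - (x + ε * Complex.I)).im| := by rw [h1]
    _ ≤ _ := Complex.abs_im_le_norm _
  exact inv_anti₀ hε hle


lemma inner_integral (t a b ε : ℝ) (hε : 0 < ε) :
    ∫ x in a..b, ε / ((t - x)^2 + ε^2)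
      = Real.arctan ((b - t)/ε) - Real.arctan ((a - t)/ε) := by
  have key : ∀ x ∈ Set.uIcc a b,
      HasDerivAt (fun y => Real.arctan ((y - t)/ε)) (ε / ((t - x)^2 + ε^2)) x := by
    intro x _
    have h1 : HasDerivAt (fun y : ℝ => (y - t)/ε) (1/ε) x := by
      simpa using ((hasDerivAt_id x).sub_const t).div_const ε
    have h2 := (Real.hasDerivAt_arctan ((x - t)/ε)).comp x h1
    refine h2.congr_deriv ?_
    have hd : (0:ℝ) < (t - x)^2 + ε^2 := by positivity
    field_simp
    ring
  rw [intervalIntegral.integral_eq_sub_of_hasDerivAt key ?_]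
  · apply Continuous.intervalIntegrable
    apply Continuous.div continuous_const (by continuity)
    intro x
    positivity

end StieltjesAux

namespace StieltjesAux

lemma tendsto_arctan_div_pos {c : ℝ} (hc : 0 < c) :
    Tendsto (fun ε : ℝ => Real.arctan (c/ε)) (nhdsWithin 0 (Set.Ioi 0))
      (nhds (Real.pi/2)) := by
  have h1 : Tendsto (fun ε : ℝ => c/ε) (nhdsWithin 0 (Set.Ioi 0)) atTop := by
    simpa [div_eq_mul_inv] using Tendsto.const_mul_atTop hc tendsto_inv_nhdsGT_zero
  exact (Real.tendsto_arctan_atTop.mono_right nhdsWithin_le_nhds).comp h1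

lemma tendsto_arctan_div_neg {c : ℝ} (hc : c < 0) :
    Tendsto (fun ε : ℝ => Real.arctan (c/ε)) (nhdsWithin 0 (Set.Ioi 0))
      (nhds (-(Real.pi/2))) := by
  have := (tendsto_arctan_div_pos (neg_pos.2 hc)).neg
  simpa [Real.arctan_neg, neg_div] using this

noncomputable def limfun (a b : ℝ) : ℝ → ℝ := fun t =>
  (Set.Ioo a b).indicator (fun _ => (1:ℝ)) t
    + ({a, b} : Set ℝ).indicator (fun _ => (1/2 : ℝ)) t

lemma tendsto_pointwise (a b : ℝ) (hab : a < b) (t : ℝ) :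
    Tendsto (fun ε : ℝ =>
        (1/Real.pi) * (Real.arctan ((b - t)/ε) - Real.arctan ((a - t)/ε)))
      (nhdsWithin 0 (Set.Ioi 0)) (nhds (limfun a b t)) := by
  have hπ : Real.pi ≠ 0 := Real.pi_ne_zero
  rcases lt_trichotomy t a with h | h | h
  · have hval : limfun a b t = 0 := by
      simp [limfun, Set.indicator, h.not_gt, h.ne, (h.trans hab).ne]
    rw [hval]
    have := ((tendsto_arctan_div_pos (by linarith : (0:ℝ) < b - t)).sub
      (tendsto_arctan_div_pos (by linarith : (0:ℝ) < a - t))).const_mul (1/Real.pi)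
    simpa using this
  · subst h
    have hval : limfun t b t = 1/2 := by
      simp [limfun, Set.indicator, lt_irrefl]
    rw [hval]
    have := ((tendsto_arctan_div_pos (by linarith : (0:ℝ) < b - t)).sub
      (tendsto_const_nhds (x := (0:ℝ)))).const_mul (1/Real.pi)
    have heq : (fun ε : ℝ =>
        (1/Real.pi) * (Real.arctan ((b - t)/ε) - Real.arctan ((t - t)/ε)))
        = fun ε : ℝ => (1/Real.pi) * (Real.arctan ((b - t)/ε) - 0) := by
      funext ε; simp
    rw [heq]
    convert this using 2
    field_simp
    ring
  · rcases lt_trichotomy t b with h' | h' | h'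
    · have hval : limfun a b t = 1 := by
        simp [limfun, Set.indicator, h, h', h.ne', h'.ne]
      rw [hval]
      have := ((tendsto_arctan_div_pos (by linarith : (0:ℝ) < b - t)).sub
        (tendsto_arctan_div_neg (by linarith : a - t < 0))).const_mul (1/Real.pi)
      convert this using 2
      field_simp
      norm_num
    · subst h'
      have hval : limfun a t t = 1/2 := by
        simp [limfun, Set.indicator, lt_irrefl, h.ne']
      rw [hval]
      have := ((tendsto_const_nhds (x := (0:ℝ))).sub
        (tendsto_arctan_div_neg (by linarith : a - t < 0))).const_mul (1/Real.pi)
      have heq : (fun ε : ℝ =>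
          (1/Real.pi) * (Real.arctan ((t - t)/ε) - Real.arctan ((a - t)/ε)))
          = fun ε : ℝ => (1/Real.pi) * (0 - Real.arctan ((a - t)/ε)) := by
        funext ε; simp
      rw [heq]
      convert this using 2
      field_simp
      ring
    · have hval : limfun a b t = 0 := by
        simp [limfun, Set.indicator, h'.not_gt, h'.ne', (hab.trans h').ne']
      rw [hval]
      have := ((tendsto_arctan_div_neg (by linarith : b - t < 0)).sub
        (tendsto_arctan_div_neg (by linarith : a - t < 0))).const_mul (1/Real.pi)
      simpa using this

lemma integral_limfun (μ : Measure ℝ) [IsFiniteMeasure μ] (a b : ℝ) :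
    ∫ t, limfun a b t ∂μ
      = (μ (Set.Ioo a b)).toReal + (1/2) * (μ ({a, b} : Set ℝ)).toReal := by
  have hm1 : MeasurableSet (Set.Ioo a b) := measurableSet_Ioo
  have hm2 : MeasurableSet ({a, b} : Set ℝ) :=
    (measurableSet_singleton a).union (measurableSet_singleton b)
  unfold limfun
  rw [MeasureTheory.integral_add]
  · rw [integral_indicator_const _ hm1, integral_indicator_const _ hm2]
    simp [mul_comm, Measure.real]
  · exact (integrable_const (1:ℝ)).indicator hm1
  · exact (integrable_const ((1:ℝ)/2)).indicator hm2

end StieltjesAux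

namespace StieltjesAux

lemma main_eq (μ : Measure ℝ) [IsFiniteMeasure μ] (a b ε : ℝ) (hab : a < b)
    (hε : 0 < ε) :
    (1 / Real.pi) *
        ∫ x in a..b, (∫ t : ℝ, ((t : ℂ) - (x + ε * Complex.I))⁻¹ ∂μ).im
      = ∫ t, (1/Real.pi) *
          (Real.arctan ((b - t)/ε) - Real.arctan ((a - t)/ε)) ∂μ := by
  have h1 : (fun x : ℝ => (∫ t : ℝ, ((t : ℂ) - (x + ε * Complex.I))⁻¹ ∂μ).im)
      = fun x : ℝ => ∫ t, ε / ((t - x)^2 + ε^2) ∂μ := by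
    funext x
    refine ((integral_im (integrable_inv μ x ε hε)).symm).trans ?_
    congr 1
    funext t
    exact im_inv t x ε
  rw [h1, MeasureTheory.integral_const_mul]
  congr 1
  haveI : IsFiniteMeasure (volume.restrict (Set.Ioc a b)) := by
    constructor; simp [Real.volume_Ioc]
  have hcont : Continuous (Function.uncurry fun x t : ℝ => ε / ((t - x)^2 + ε^2)) := by
    apply Continuous.div continuous_const
    · apply Continuous.add
      · exact ((continuous_snd.sub continuous_fst).pow 2)
      · exact continuous_const
    · intro p; positivity
  have hint : Integrable (Function.uncurry fun x t : ℝ => ε / ((t - x)^2 + ε^2))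
      ((volume.restrict (Set.Ioc a b)).prod μ) := by
    refine (integrable_const (ε⁻¹)).mono' hcont.aestronglyMeasurable ?_
    filter_upwards with p
    rcases p with ⟨x, t⟩
    have hd : (0:ℝ) < (t - x)^2 + ε^2 := by positivity
    rw [Function.uncurry, Real.norm_of_nonneg (by positivity)]
    rw [show ε⁻¹ = ε / ε^2 by field_simp [pow_two]]
    apply div_le_div_of_nonneg_left hε.le ?_ ?_
    · positivity
    · nlinarith [sq_nonneg (t - x)]
  rw [intervalIntegral.integral_of_le hab.le,
    MeasureTheory.integral_integral_swap hint]
  congr 1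
  funext t
  rw [← intervalIntegral.integral_of_le hab.le, inner_integral t a b ε hε]

end StieltjesAux

open StieltjesAux

/-- Stieltjes inversion formula: for a finite Borel measure `μ` on `ℝ` with
Stieltjes transform `S` and any `a < b`,
`lim_{ε↘0} (1/π) ∫_a^b Im S(x + iε) dx = μ((a,b)) + (1/2) μ({a,b})`. -/
theorem stieltjes_inversion (μ : Measure ℝ) [IsFiniteMeasure μ] (a b : ℝ) (hab : a < b) :
    Tendsto
      (fun ε : ℝ =>
        (1 / Real.pi) *
          ∫ x in a..b, (∫ t : ℝ, ((t : ℂ) - (x + ε * Complex.I))⁻¹ ∂μ).im)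
      (nhdsWithin 0 (Set.Ioi 0))
      (nhds ((μ (Set.Ioo a b)).toReal + (1 / 2) * (μ {a, b}).toReal)) := by
  have hπ : (0:ℝ) < Real.pi := Real.pi_pos
  have key : Tendsto
      (fun ε : ℝ => ∫ t, (1/Real.pi) *
          (Real.arctan ((b - t)/ε) - Real.arctan ((a - t)/ε)) ∂μ)
      (nhdsWithin 0 (Set.Ioi 0)) (nhds (∫ t, limfun a b t ∂μ)) := by
    apply MeasureTheory.tendsto_integral_filter_of_dominated_convergence
      (bound := fun _ => (1:ℝ))
    · filter_upwards with ε
      apply Continuous.aestronglyMeasurable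
      apply Continuous.mul continuous_const
      apply Continuous.sub
      · exact Real.continuous_arctan.comp ((continuous_const.sub continuous_id).div_const ε)
      · exact Real.continuous_arctan.comp ((continuous_const.sub continuous_id).div_const ε)
    · filter_upwards with ε
      filter_upwards with t
      have harct : ∀ u : ℝ, |Real.arctan u| ≤ Real.pi/2 := fun u =>
        abs_le.2 ⟨(Real.neg_pi_div_two_lt_arctan u).le, (Real.arctan_lt_pi_div_two u).le⟩
      rw [Real.norm_eq_abs, abs_mul, abs_of_pos (by positivity : (0:ℝ) < 1/Real.pi)]
      have h2 : |Real.arctan ((b - t)/ε) - Real.arctan ((a - t)/ε)| ≤ Real.pi := by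
        calc |Real.arctan ((b - t)/ε) - Real.arctan ((a - t)/ε)|
            ≤ |Real.arctan ((b - t)/ε)| + |Real.arctan ((a - t)/ε)| := abs_sub _ _
          _ ≤ Real.pi/2 + Real.pi/2 := add_le_add (harct _) (harct _)
          _ = Real.pi := by ring
      calc (1/Real.pi) * |Real.arctan ((b - t)/ε) - Real.arctan ((a - t)/ε)|
          ≤ (1/Real.pi) * Real.pi := by
            apply mul_le_mul_of_nonneg_left h2 (by positivity)
        _ = 1 := by field_simp
    · exact integrable_const 1
    · filter_upwards with t using tendsto_pointwise a b hab t
  rw [integral_limfun μ a b] at key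
  apply key.congr'
  filter_upwards [self_mem_nhdsWithin] with ε hε
  exact (main_eq μ a b ε hab hε).symm
end

section
/- If two finite Borel measures μ and ν on ℝ have the same Stieltjes transform on the upper half plane, then μ = ν. -/
open MeasureTheory Filter Real Topology ENNReal NNReal

-- kernel positivity of denominator
lemma denom_pos {ε : ℝ} (hε : 0 < ε) (a : ℝ) : 0 < a ^ 2 + ε ^ 2 :=
  add_pos_of_nonneg_of_pos (sq_nonneg a) (pow_pos hε 2)

lemma kernel_cont {ε : ℝ} (hε : 0 < ε) (t : ℝ) :
    Continuous fun x : ℝ => ε / ((x - t) ^ 2 + ε ^ 2) :=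
  continuous_const.div (by continuity) (fun x => (denom_pos hε _).ne')

lemma kernel_le {ε : ℝ} (hε : 0 < ε) (t x : ℝ) :
    ε / ((x - t) ^ 2 + ε ^ 2) ≤ ε⁻¹ := by
  rw [div_le_iff₀ (denom_pos hε _)]
  rw [inv_mul_eq_div, le_div_iff₀ hε]
  nlinarith [sq_nonneg (x - t), sq_nonneg ε]

lemma kernel_integrable {ε : ℝ} (hε : 0 < ε) (t : ℝ) :
    Integrable (fun x : ℝ => ε / ((x - t) ^ 2 + ε ^ 2)) := by
  have h1 : Integrable (fun x : ℝ => (1 + (ε⁻¹ * x) ^ 2)⁻¹) :=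
    integrable_inv_one_add_sq.comp_mul_left' (inv_ne_zero hε.ne')
  have h2 := (h1.comp_sub_right t).const_mul ε⁻¹
  refine h2.congr (Filter.Eventually.of_forall fun x => by
    have hε2 : (ε : ℝ) ≠ 0 := hε.ne'
    field_simp
    ring)

lemma integrable_of_bdd {E : Type*} [NormedAddCommGroup E] {μ : Measure ℝ} [IsFiniteMeasure μ]
    {f : ℝ → E} (hf : Continuous f) (C : ℝ) (hC : ∀ x, ‖f x‖ ≤ C) : Integrable f μ :=
  ⟨hf.aestronglyMeasurable, HasFiniteIntegral.of_bounded (C := C) (Eventually.of_forall hC)⟩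

lemma stepA (μ ν : Measure ℝ) [IsFiniteMeasure μ] [IsFiniteMeasure ν]
    (h : ∀ z : ℂ, 0 < z.im →
      ∫ t : ℝ, ((t : ℂ) - z)⁻¹ ∂μ = ∫ t : ℝ, ((t : ℂ) - z)⁻¹ ∂ν)
    {ε : ℝ} (hε : 0 < ε) (x : ℝ) :
    ∫⁻ t, ENNReal.ofReal (ε / ((x - t) ^ 2 + ε ^ 2)) ∂μ
      = ∫⁻ t, ENNReal.ofReal (ε / ((x - t) ^ 2 + ε ^ 2)) ∂ν := by
  set z : ℂ := x + ε * Complex.I with hz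
  have hzim : z.im = ε := by simp [hz]
  have hne : ∀ t : ℝ, ((t : ℂ) - z) ≠ 0 := by
    intro t h0
    have : ((t : ℂ) - z).im = 0 := by rw [h0]; simp
    simp [Complex.sub_im, hzim] at this
    exact hε.ne' this
  have hcont : Continuous fun t : ℝ => ((t : ℂ) - z)⁻¹ :=
    ((Complex.continuous_ofReal.sub continuous_const).inv₀ hne)
  have hbd : ∀ t : ℝ, ‖((t : ℂ) - z)⁻¹‖ ≤ ε⁻¹ := by
    intro t
    rw [norm_inv]
    refine inv_anti₀ hε ?_
    calc ε = |((t : ℂ) - z).im| := by simp [Complex.sub_im, hzim, abs_of_pos hε]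
    _ ≤ ‖(t : ℂ) - z‖ := Complex.abs_im_le_norm _
  have him : ∀ t : ℝ, (((t : ℂ) - z)⁻¹).im = ε / ((x - t) ^ 2 + ε ^ 2) := by
    intro t
    rw [Complex.inv_im, Complex.normSq_apply]
    simp [Complex.sub_re, Complex.sub_im, hz]
    ring_nf
  have key : ∫ t, ε / ((x - t) ^ 2 + ε ^ 2) ∂μ = ∫ t, ε / ((x - t) ^ 2 + ε ^ 2) ∂ν := by
    have h1 := h z (by rw [hzim]; exact hε)
    have e1 : ∀ (ρ : Measure ℝ) [IsFiniteMeasure ρ],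
        ∫ t, ε / ((x - t) ^ 2 + ε ^ 2) ∂ρ = (∫ t : ℝ, ((t : ℂ) - z)⁻¹ ∂ρ).im := by
      intro ρ _
      rw [show (∫ t : ℝ, ((t : ℂ) - z)⁻¹ ∂ρ).im
          = RCLike.im (∫ t : ℝ, ((t : ℂ) - z)⁻¹ ∂ρ) from rfl,
        ← integral_im (integrable_of_bdd hcont ε⁻¹ hbd)]
      exact integral_congr_ae (Eventually.of_forall fun t => (him t).symm)
    rw [e1 μ, e1 ν, h1]
  have kcont : Continuous fun t : ℝ => ε / ((x - t) ^ 2 + ε ^ 2) :=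
    continuous_const.div (by continuity) (fun t => (denom_pos hε _).ne')
  have knn : ∀ t : ℝ, 0 ≤ ε / ((x - t) ^ 2 + ε ^ 2) :=
    fun t => div_nonneg hε.le (denom_pos hε _).le
  have e2 : ∀ (ρ : Measure ℝ) [IsFiniteMeasure ρ],
      ∫⁻ t, ENNReal.ofReal (ε / ((x - t) ^ 2 + ε ^ 2)) ∂ρ
        = ENNReal.ofReal (∫ t, ε / ((x - t) ^ 2 + ε ^ 2) ∂ρ) := by
    intro ρ _
    rw [← ofReal_integral_eq_lintegral_ofReal
      (integrable_of_bdd kcont ε⁻¹ (fun t => by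
        rw [Real.norm_eq_abs, abs_of_nonneg (knn t)]; exact kernel_le hε t x))
      (Eventually.of_forall knn)]
  rw [e2 μ, e2 ν, key]

lemma changeVar (g : ℝ → ℝ) {ε : ℝ} (hε : 0 < ε) (t : ℝ) :
    ∫ x, g x * (ε / ((x - t) ^ 2 + ε ^ 2))
      = ∫ u, g (t + ε * u) * (1 + u ^ 2)⁻¹ := by
  have h1 : ∫ x, g x * (ε / ((x - t) ^ 2 + ε ^ 2))
      = ∫ y, g (t + y) * (ε / (y ^ 2 + ε ^ 2)) := by
    rw [← integral_add_left_eq_self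
      (fun x => g x * (ε / ((x - t) ^ 2 + ε ^ 2))) t]
    simp
  rw [h1]
  have h2 := MeasureTheory.Measure.integral_comp_mul_left
    (fun y => g (t + y) * (ε / (y ^ 2 + ε ^ 2))) ε
  rw [abs_of_pos (inv_pos.mpr hε)] at h2
  have h3 : ∫ y, g (t + y) * (ε / (y ^ 2 + ε ^ 2))
      = ε • ∫ u, g (t + ε * u) * (ε / ((ε * u) ^ 2 + ε ^ 2)) := by
    rw [h2, smul_smul, mul_inv_cancel₀ hε.ne', one_smul]
  rw [h3, smul_eq_mul, ← MeasureTheory.integral_const_mul]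
  congr 1
  funext u
  have hd : (ε * u) ^ 2 + ε ^ 2 = ε ^ 2 * (1 + u ^ 2) := by ring
  rw [hd]
  have h4 : (1 : ℝ) + u ^ 2 ≠ 0 := by positivity
  field_simp

lemma kernel_integral {ε : ℝ} (hε : 0 < ε) (t : ℝ) :
    ∫ x, ε / ((x - t) ^ 2 + ε ^ 2) = π := by
  have := changeVar (fun _ => 1) hε t
  simpa using this.trans (by simp [integral_univ_inv_one_add_sq])

lemma tendsto_conv (g : ℝ → ℝ) (hg : Continuous g) (M : ℝ) (hM : ∀ x, |g x| ≤ M) (t : ℝ) :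
    Filter.Tendsto (fun n : ℕ => ∫ u, g (t + ((n : ℝ) + 1)⁻¹ * u) * (1 + u ^ 2)⁻¹)
      Filter.atTop (𝓝 (π * g t)) := by
  have hπ : π * g t = ∫ u : ℝ, g t * (1 + u ^ 2)⁻¹ := by
    rw [MeasureTheory.integral_const_mul, integral_univ_inv_one_add_sq]; ring
  rw [hπ]
  refine MeasureTheory.tendsto_integral_of_dominated_convergence
    (fun u => M * (1 + u ^ 2)⁻¹) ?_ (integrable_inv_one_add_sq.const_mul M) ?_ ?_
  · intro n
    exact ((hg.comp (by continuity)).mul (((continuous_const.add (continuous_pow 2)).inv₀ (fun u : ℝ => (show (0:ℝ) < 1 + u ^ 2 by positivity).ne')) : Continuous fun u : ℝ => ((1 : ℝ) + u ^ 2)⁻¹)).aestronglyMeasurable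
  · intro n
    refine Eventually.of_forall fun u => ?_
    rw [Real.norm_eq_abs, abs_mul, abs_of_nonneg (by positivity : (0:ℝ) ≤ (1 + u ^ 2)⁻¹)]
    exact mul_le_mul_of_nonneg_right (hM _) (by positivity)
  · refine Eventually.of_forall fun u => ?_
    have h0 : Filter.Tendsto (fun n : ℕ => t + ((n : ℝ) + 1)⁻¹ * u) Filter.atTop (𝓝 t) := by
      have : Filter.Tendsto (fun n : ℕ => ((n : ℝ) + 1)⁻¹) Filter.atTop (𝓝 0) := by
        simpa [one_div] using tendsto_one_div_add_atTop_nhds_zero_nat (𝕜 := ℝ)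
      have := (this.mul_const u).const_add t
      simpa using this
    exact ((hg.continuousAt.tendsto.comp h0).mul_const _)

lemma main_aux (μ ν : Measure ℝ) [IsFiniteMeasure μ] [IsFiniteMeasure ν]
    (h : ∀ z : ℂ, 0 < z.im →
      ∫ t : ℝ, ((t : ℂ) - z)⁻¹ ∂μ = ∫ t : ℝ, ((t : ℂ) - z)⁻¹ ∂ν)
    (g : ℝ → ℝ) (hg : Continuous g) (hg0 : ∀ x, 0 ≤ g x)
    (M : ℝ) (hM : ∀ x, |g x| ≤ M) :
    ∫⁻ t, ENNReal.ofReal (g t) ∂μ = ∫⁻ t, ENNReal.ofReal (g t) ∂ν := by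
  set ε : ℕ → ℝ := fun n => ((n : ℝ) + 1)⁻¹ with hε_def
  have hε : ∀ n, 0 < ε n := fun n => by positivity
  set F : ℕ → ℝ → ℝ≥0∞ := fun n t =>
    ENNReal.ofReal (∫ x, g x * (ε n / ((x - t) ^ 2 + (ε n) ^ 2))) with hF_def
  have knn : ∀ n t x, 0 ≤ ε n / ((x - t) ^ 2 + (ε n) ^ 2) :=
    fun n t x => div_nonneg (hε n).le (denom_pos (hε n) _).le
  have hGint : ∀ n t, Integrable (fun x => g x * (ε n / ((x - t) ^ 2 + (ε n) ^ 2))) := by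
    intro n t
    refine ((kernel_integrable (hε n) t).const_mul M).mono'
      ((hg.mul (kernel_cont (hε n) t)).aestronglyMeasurable)
      (Eventually.of_forall fun x => ?_)
    rw [Real.norm_eq_abs, abs_mul, abs_of_nonneg (knn n t x)]
    exact mul_le_mul_of_nonneg_right (hM x) (knn n t x)
  -- K1 : F as a double lintegral
  have K1 : ∀ n t, F n t = ∫⁻ x, ENNReal.ofReal (g x)
      * ENNReal.ofReal (ε n / ((x - t) ^ 2 + (ε n) ^ 2)) := by
    intro n t
    simp only [hF_def]
    rw [ofReal_integral_eq_lintegral_ofReal (hGint n t)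
      (Eventually.of_forall fun x => mul_nonneg (hg0 x) (knn n t x))]
    simp_rw [ENNReal.ofReal_mul (hg0 _)]
  -- joint continuity / measurability of the integrand
  have Hcont : ∀ n, Continuous fun p : ℝ × ℝ =>
      ENNReal.ofReal (g p.2 * (ε n / ((p.2 - p.1) ^ 2 + (ε n) ^ 2))) := by
    intro n
    refine ENNReal.continuous_ofReal.comp ((hg.comp continuous_snd).mul ?_)
    exact continuous_const.div (by continuity) (fun p => (denom_pos (hε n) _).ne')
  -- K2 : the two lintegrals of F n agree
  have K2 : ∀ n, ∫⁻ t, F n t ∂μ = ∫⁻ t, F n t ∂ν := by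
    intro n
    have swap : ∀ (ρ : Measure ℝ) [IsFiniteMeasure ρ],
        ∫⁻ t, F n t ∂ρ = ∫⁻ x, ENNReal.ofReal (g x)
          * ∫⁻ t, ENNReal.ofReal (ε n / ((x - t) ^ 2 + (ε n) ^ 2)) ∂ρ := by
      intro ρ _
      simp_rw [K1 n, ← ENNReal.ofReal_mul (hg0 _)]
      rw [lintegral_lintegral_swap (((Hcont n).measurable).aemeasurable)]
      congr 1
      funext x
      simp_rw [ENNReal.ofReal_mul (hg0 x)]
      rw [lintegral_const_mul' _ _ ENNReal.ofReal_ne_top]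
    rw [swap μ, swap ν]
    congr 1
    funext x
    rw [stepA μ ν h (hε n) x]
  -- K3 : measurability of F n
  have K3 : ∀ n, Measurable (F n) := by
    intro n
    have hFeq : F n = fun t => ∫⁻ x,
        ENNReal.ofReal (g x * (ε n / ((x - t) ^ 2 + (ε n) ^ 2))) := by
      funext t
      rw [K1 n]
      simp_rw [← ENNReal.ofReal_mul (hg0 _)]
    rw [hFeq]
    exact (Hcont n).measurable.lintegral_prod_right'
  -- K4 : uniform bound
  have hM0 : 0 ≤ M := le_trans (abs_nonneg _) (hM 0)
  have K4 : ∀ n t, F n t ≤ ENNReal.ofReal (M * π) := by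
    intro n t
    simp only [hF_def]
    refine ENNReal.ofReal_le_ofReal ?_
    have : ∫ x, g x * (ε n / ((x - t) ^ 2 + (ε n) ^ 2))
        ≤ ∫ x, M * (ε n / ((x - t) ^ 2 + (ε n) ^ 2)) := by
      refine integral_mono_of_nonneg
        (Eventually.of_forall fun x => mul_nonneg (hg0 x) (knn n t x))
        ((kernel_integrable (hε n) t).const_mul M)
        (Eventually.of_forall fun x =>
          mul_le_mul_of_nonneg_right ((le_abs_self _).trans (hM x)) (knn n t x))
    refine this.trans ?_
    rw [MeasureTheory.integral_const_mul, kernel_integral (hε n) t]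
  -- K5 : pointwise convergence
  have K5 : ∀ t, Filter.Tendsto (fun n => F n t) Filter.atTop
      (𝓝 (ENNReal.ofReal (π * g t))) := by
    intro t
    have : ∀ n, F n t = ENNReal.ofReal (∫ u, g (t + ε n * u) * (1 + u ^ 2)⁻¹) := by
      intro n; simp only [hF_def]; rw [changeVar g (hε n) t]
    simp_rw [this]
    exact (ENNReal.continuous_ofReal.tendsto _).comp (tendsto_conv g hg M hM t)
  -- dominated convergence on both sides
  have lim : ∀ (ρ : Measure ℝ) [IsFiniteMeasure ρ],
      Filter.Tendsto (fun n => ∫⁻ t, F n t ∂ρ) Filter.atTop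
        (𝓝 (∫⁻ t, ENNReal.ofReal (π * g t) ∂ρ)) := by
    intro ρ _
    refine tendsto_lintegral_of_dominated_convergence
      (fun _ => ENNReal.ofReal (M * π)) K3
      (fun n => Eventually.of_forall (K4 n)) ?_
      (Eventually.of_forall K5)
    rw [lintegral_const]
    exact ENNReal.mul_ne_top ENNReal.ofReal_ne_top (measure_ne_top ρ _)
  have keyπ : ∫⁻ t, ENNReal.ofReal (π * g t) ∂μ = ∫⁻ t, ENNReal.ofReal (π * g t) ∂ν := by
    exact tendsto_nhds_unique ((lim μ).congr K2) (lim ν)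
  have expand : ∀ (ρ : Measure ℝ),
      ∫⁻ t, ENNReal.ofReal (π * g t) ∂ρ
        = ENNReal.ofReal π * ∫⁻ t, ENNReal.ofReal (g t) ∂ρ := by
    intro ρ
    simp_rw [ENNReal.ofReal_mul Real.pi_pos.le]
    rw [lintegral_const_mul' _ _ ENNReal.ofReal_ne_top]
  rw [expand μ, expand ν] at keyπ
  exact (ENNReal.mul_right_inj (ENNReal.ofReal_pos.mpr Real.pi_pos).ne'
    ENNReal.ofReal_ne_top).mp keyπ

/-- If two finite Borel measures on `ℝ` have the same Stieltjes transform on the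
upper half plane, then they are equal. -/
theorem stieltjes_transform_injective (μ ν : Measure ℝ)
    [IsFiniteMeasure μ] [IsFiniteMeasure ν]
    (h : ∀ z : ℂ, 0 < z.im →
      ∫ t : ℝ, ((t : ℂ) - z)⁻¹ ∂μ = ∫ t : ℝ, ((t : ℂ) - z)⁻¹ ∂ν) :
    μ = ν := by
  refine ext_of_forall_lintegral_eq_of_IsFiniteMeasure fun f => ?_
  have hg : Continuous fun x : ℝ => (f x : ℝ) :=
    NNReal.continuous_coe.comp f.continuous
  have hg0 : ∀ x : ℝ, (0 : ℝ) ≤ (f x : ℝ) := fun x => (f x).coe_nonneg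
  obtain ⟨C, hC⟩ := f.bounded
  have hM : ∀ x : ℝ, |((f x : ℝ))| ≤ C + (f 0 : ℝ) := by
    intro x
    rw [abs_of_nonneg (hg0 x)]
    have := hC x 0
    rw [NNReal.dist_eq] at this
    have h2 := abs_le.mp this
    linarith [h2.1, h2.2]
  have key := main_aux μ ν h (fun x => (f x : ℝ)) hg hg0 _ hM
  simpa [ENNReal.ofReal_coe_nnreal] using key
end
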